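/- Let (π, U, H) be a faithful J-covariant representation of (A, α), i.e. π faithful, U π(a) U* = π(α(a)) for all a, and J = {a : U*U π(a) = π(a)} where J ∩ ker α = {0}. Then the map sending (a + I) ⊕ (b + J) to U*U π(a) + (1 − U*U) π(b) (where I = ker α) is a well-defined isometric *-isomorphism from A_J = (A/I) ⊕ (A/J) onto the C*-algebra generated by π(A) and U*U. -/

import Mathlib

/-- Let `(π, U, H)` be a faithful `J`-covariant representation of `(A, α)`
(`π` faithful, `U π(a) U* = π(α(a))`, `J = {a : U*U π(a) = π(a)}`, `J ∩ ker α = {0}`).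
With `A/I` (`I = ker α`) and `A/J` realized via surjective *-homomorphisms `qI`, `qJ`,
the map `(qI a, qJ b) ↦ U*U π(a) + (1 − U*U) π(b)` is a well-defined isometric
*-isomorphism from `A_J = (A/I) ⊕ (A/J)` onto the C*-algebra generated by `π(A)` and
`U*U`. -/
theorem extension_isomorphic_to_generated_algebra
    {A : Type*} [CStarAlgebra A]
    {B : Type*} [CStarAlgebra B] {C : Type*} [CStarAlgebra C]
    {H : Type*} [NormedAddCommGroup H] [InnerProductSpace ℂ H] [CompleteSpace H]
    (α : A →⋆ₐ[ℂ] A) (π : A →⋆ₐ[ℂ] (H →L[ℂ] H)) (U : H →L[ℂ] H)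
    (hfaithful : Function.Injective π)
    (hcov : ∀ a : A, U * π a * star U = π (α a))
    (J : TwoSidedIdeal A)
    (hJ : (J : Set A) = {a : A | star U * U * π a = π a})
    (horth : {a : A | α a = 0} ∩ (J : Set A) = {0})
    (qI : A →⋆ₐ[ℂ] B) (hqI : Function.Surjective qI)
    (hkerI : ∀ a : A, qI a = 0 ↔ α a = 0)
    (qJ : A →⋆ₐ[ℂ] C) (hqJ : Function.Surjective qJ)
    (hkerJ : ∀ a : A, qJ a = 0 ↔ a ∈ J) :
    ∃ Φ : (B × C) →⋆ₐ[ℂ] (H →L[ℂ] H),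
      (∀ a b : A, Φ (qI a, qJ b) = star U * U * π a + (1 - star U * U) * π b) ∧
      Function.Injective Φ ∧
      (∀ x : B × C, ‖Φ x‖ = ‖x‖) ∧
      Set.range ⇑Φ =
        ((StarAlgebra.adjoin ℂ (Set.range ⇑π ∪ {star U * U})).topologicalClosure :
          Set (H →L[ℂ] H)) := by
  classical
  obtain ⟨P, hPdef⟩ : ∃ P : H →L[ℂ] H, P = star U * U := ⟨_, rfl⟩
  rw [show star U * U = P from hPdef.symm] at hJ ⊢
  -- U is a coisometry
  have hUU : U * star U = 1 := by simpa using hcov 1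
  have hP2 : P * P = P := by
    rw [hPdef]
    calc star U * U * (star U * U) = star U * (U * star U) * U := by simp only [mul_assoc]
      _ = star U * U := by rw [hUU, mul_one]
  have hPstar : star P = P := by rw [hPdef, star_mul, star_star]
  have hUP : U * P = U := by rw [hPdef, ← mul_assoc, hUU, one_mul]
  have hq2 : (1 - P) * (1 - P) = 1 - P := by
    rw [sub_mul, one_mul, mul_sub, mul_one, hP2, sub_self, sub_zero]
  have hPq : P * (1 - P) = 0 := by rw [mul_sub, mul_one, hP2, sub_self]
  have hqP : (1 - P) * P = 0 := by rw [sub_mul, one_mul, hP2, sub_self]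
  -- the key covariance computation
  have hkey : ∀ a : A, U * π a * (1 - P) = 0 := by
    intro a
    have hstarx : star (U * π a * (1 - P)) = (1 - P) * (π (star a) * star U) := by
      simp only [star_mul, star_sub, star_one, hPstar, ← map_star, mul_assoc]
    have e1 : U * π a * (π (star a) * star U) = π (α (a * star a)) := by
      rw [← hcov, map_mul]
      simp only [mul_assoc]
    have e2 : U * π a * (P * (π (star a) * star U)) = π (α a) * π (α (star a)) := by
      rw [← hcov, ← hcov]
      simp only [hPdef, mul_assoc]
    have hxx : (U * π a * (1 - P)) * star (U * π a * (1 - P)) = 0 := by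
      calc (U * π a * (1 - P)) * star (U * π a * (1 - P))
          = U * π a * ((1 - P) * ((1 - P) * (π (star a) * star U))) := by
            rw [hstarx, mul_assoc]
        _ = U * π a * ((1 - P) * (π (star a) * star U)) := by
            rw [← mul_assoc (1 - P), hq2]
        _ = U * π a * (π (star a) * star U) - U * π a * (P * (π (star a) * star U)) := by
            rw [sub_mul, one_mul, mul_sub]
        _ = 0 := by rw [e1, e2, ← map_mul, ← map_mul, sub_self]
    have hn : ‖U * π a * (1 - P)‖ * ‖U * π a * (1 - P)‖ = 0 := by
      rw [← CStarRing.norm_self_mul_star, hxx, norm_zero]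
    exact norm_eq_zero.mp (mul_self_eq_zero.mp hn)
  have hPπq : ∀ a : A, P * π a * (1 - P) = 0 := by
    intro a
    have h0 : star U * (U * π a * (1 - P)) = 0 := by rw [hkey a, mul_zero]
    calc P * π a * (1 - P) = star U * (U * π a * (1 - P)) := by
          simp only [hPdef, mul_assoc]
      _ = 0 := h0
  have hqπP : ∀ a : A, (1 - P) * π a * P = 0 := by
    intro a
    have h := congrArg star (hPπq (star a))
    simpa only [star_mul, star_sub, star_one, hPstar, ← map_star, star_star, star_zero,
      mul_assoc] using h
  have hPπP : ∀ a : A, P * π a = P * π a * P := by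
    intro a
    have := hPπq a
    rwa [mul_sub, mul_one, sub_eq_zero] at this
  have hcomm : ∀ a : A, P * π a = π a * P := by
    intro a
    have h2 : π a * P = P * π a * P := by
      have := hqπP a
      rwa [sub_mul, sub_mul, one_mul, sub_eq_zero] at this
    exact (hPπP a).trans h2.symm
  have hc : ∀ a : A, Commute P (π a) := hcomm
  have hcq : ∀ a : A, Commute (1 - P) (π a) := fun a => (Commute.one_left (π a)).sub_left (hc a)
  have hcommq : ∀ a : A, (1 - P) * π a = π a * (1 - P) := fun a => (hcq a).eq
  -- kernel characterizations
  have hPI : ∀ a : A, P * π a = 0 ↔ α a = 0 := by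
    intro a
    constructor
    · intro h
      have hz : π (α a) = 0 := by
        calc π (α a) = U * π a * star U := (hcov a).symm
          _ = U * P * π a * star U := by rw [hUP]
          _ = U * (P * π a) * star U := by rw [mul_assoc U]
          _ = 0 := by rw [h, mul_zero, zero_mul]
      exact hfaithful (by rw [hz, map_zero])
    · intro h
      have hz : π (α a) = 0 := by rw [h, map_zero]
      have h2 : P * π a * P = 0 := by
        calc P * π a * P = star U * (U * π a * star U) * U := by
              simp only [hPdef, mul_assoc]
          _ = star U * π (α a) * U := by rw [hcov]
          _ = 0 := by rw [hz, mul_zero, zero_mul]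
      rw [hPπP a, h2]
  have hQJ : ∀ a : A, (1 - P) * π a = 0 ↔ a ∈ J := by
    intro a
    have hmem : a ∈ J ↔ P * π a = π a := by
      have := Set.ext_iff.mp hJ a
      simpa using this
    rw [sub_mul, one_mul, sub_eq_zero, hmem]
    exact eq_comm
  have hsum : ∀ a : A, P * π a + (1 - P) * π a = π a := by
    intro a
    rw [← add_mul]
    have : P + (1 - P) = 1 := by abel
    rw [this, one_mul]
  -- construct the underlying function with the defining property
  obtain ⟨F, hF⟩ : ∃ F : B × C → (H →L[ℂ] H),
      ∀ a b : A, F (qI a, qJ b) = P * π a + (1 - P) * π b := by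
    have hsurj : ∀ x : B × C, ∃ ab : A × A, (qI ab.1, qJ ab.2) = x := by
      intro x
      obtain ⟨a, ha⟩ := hqI x.1
      obtain ⟨b, hb⟩ := hqJ x.2
      exact ⟨(a, b), by rw [ha, hb]⟩
    refine ⟨fun x => P * π ((hsurj x).choose).1 + (1 - P) * π ((hsurj x).choose).2,
      fun a b => ?_⟩
    have h := (hsurj (qI a, qJ b)).choose_spec
    have ha' : qI ((hsurj (qI a, qJ b)).choose).1 = qI a := congrArg Prod.fst h
    have hb' : qJ ((hsurj (qI a, qJ b)).choose).2 = qJ b := congrArg Prod.snd h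
    have hIa : P * π ((hsurj (qI a, qJ b)).choose).1 = P * π a := by
      have h0 : qI (((hsurj (qI a, qJ b)).choose).1 - a) = 0 := by
        rw [map_sub, ha', sub_self]
      have hα := (hkerI _).mp h0
      have := (hPI _).mpr hα
      rwa [map_sub, mul_sub, sub_eq_zero] at this
    have hJb : (1 - P) * π ((hsurj (qI a, qJ b)).choose).2 = (1 - P) * π b := by
      have h0 : qJ (((hsurj (qI a, qJ b)).choose).2 - b) = 0 := by
        rw [map_sub, hb', sub_self]
      have hm := (hkerJ _).mp h0
      have := (hQJ _).mpr hm
      rwa [map_sub, mul_sub, sub_eq_zero] at this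
    show P * π ((hsurj (qI a, qJ b)).choose).1 + (1 - P) * π ((hsurj (qI a, qJ b)).choose).2 =
      P * π a + (1 - P) * π b
    rw [hIa, hJb]
  -- algebraic identities for products
  have h1 : ∀ x y : A, (P * π x) * (P * π y) = P * π (x * y) := fun x y => by
    rw [(hc x).symm.mul_mul_mul_comm, hP2, ← map_mul]
  have h2 : ∀ x y : A, ((1 - P) * π x) * ((1 - P) * π y) = (1 - P) * π (x * y) := fun x y => by
    rw [(hcq x).symm.mul_mul_mul_comm, hq2, ← map_mul]
  have h3 : ∀ x y : A, (P * π x) * ((1 - P) * π y) = 0 := fun x y => by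
    rw [(hcq x).symm.mul_mul_mul_comm, hPq, zero_mul]
  have h4 : ∀ x y : A, ((1 - P) * π x) * (P * π y) = 0 := fun x y => by
    rw [(hc x).symm.mul_mul_mul_comm, hqP, zero_mul]
  -- F is a star algebra homomorphism
  have hFone : F 1 = 1 := by
    have h0 : (1 : B × C) = (qI 1, qJ 1) := by rw [map_one, map_one]; rfl
    rw [h0, hF, map_one, mul_one, mul_one]
    abel
  have hFmul : ∀ x y : B × C, F (x * y) = F x * F y := by
    intro x y
    obtain ⟨a, ha⟩ := hqI x.1
    obtain ⟨b, hb⟩ := hqJ x.2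
    obtain ⟨a', ha'⟩ := hqI y.1
    obtain ⟨b', hb'⟩ := hqJ y.2
    have hx : x = (qI a, qJ b) := by rw [ha, hb]
    have hy : y = (qI a', qJ b') := by rw [ha', hb']
    rw [hx, hy, Prod.mk_mul_mk, ← map_mul, ← map_mul, hF, hF, hF, add_mul, mul_add, mul_add,
      h1, h2, h3, h4]
    abel
  have hFzero : F 0 = 0 := by
    have h0 : (0 : B × C) = (qI 0, qJ 0) := by rw [map_zero, map_zero]; rfl
    rw [h0, hF, map_zero, mul_zero, mul_zero, add_zero]
  have hFadd : ∀ x y : B × C, F (x + y) = F x + F y := by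
    intro x y
    obtain ⟨a, ha⟩ := hqI x.1
    obtain ⟨b, hb⟩ := hqJ x.2
    obtain ⟨a', ha'⟩ := hqI y.1
    obtain ⟨b', hb'⟩ := hqJ y.2
    have hx : x = (qI a, qJ b) := by rw [ha, hb]
    have hy : y = (qI a', qJ b') := by rw [ha', hb']
    rw [hx, hy, Prod.mk_add_mk, ← map_add, ← map_add, hF, hF, hF, map_add, map_add,
      mul_add, mul_add]
    abel
  have hFalg : ∀ r : ℂ, F (algebraMap ℂ (B × C) r) = algebraMap ℂ (H →L[ℂ] H) r := by
    intro r
    have h0 : algebraMap ℂ (B × C) r = (qI (algebraMap ℂ A r), qJ (algebraMap ℂ A r)) := by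
      rw [AlgHomClass.commutes, AlgHomClass.commutes]
      rfl
    rw [h0, hF, hsum, AlgHomClass.commutes]
  have hFstar : ∀ x : B × C, F (star x) = star (F x) := by
    intro x
    obtain ⟨a, ha⟩ := hqI x.1
    obtain ⟨b, hb⟩ := hqJ x.2
    have hx : x = (qI a, qJ b) := by rw [ha, hb]
    have hsx : star x = (qI (star a), qJ (star b)) := by
      rw [hx, map_star, map_star]
      rfl
    rw [hsx, hx, hF, hF, star_add, star_mul, star_mul, star_sub, star_one, hPstar,
      ← map_star, ← map_star, ← hcomm, ← hcommq]
  set Φ : (B × C) →⋆ₐ[ℂ] (H →L[ℂ] H) :=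
    { toFun := F
      map_one' := hFone
      map_mul' := hFmul
      map_zero' := hFzero
      map_add' := hFadd
      commutes' := hFalg
      map_star' := hFstar } with hΦ
  have hΦapp : ∀ x : B × C, Φ x = F x := fun _ => rfl
  have hinj : Function.Injective Φ := by
    rw [injective_iff_map_eq_zero]
    intro x hx0
    obtain ⟨a, ha⟩ := hqI x.1
    obtain ⟨b, hb⟩ := hqJ x.2
    have hx : x = (qI a, qJ b) := by rw [ha, hb]
    rw [hx, hΦapp, hF] at hx0
    have hPa : P * π a = 0 := by
      have := congrArg (fun z => P * z) hx0
      simpa only [mul_add, ← mul_assoc, hP2, hPq, zero_mul, add_zero, mul_zero] using this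
    have hqb : (1 - P) * π b = 0 := by
      have := congrArg (fun z => (1 - P) * z) hx0
      simpa only [mul_add, ← mul_assoc, hq2, hqP, zero_mul, zero_add, mul_zero] using this
    rw [hx, (hkerI a).mpr ((hPI a).mp hPa), (hkerJ b).mpr ((hQJ b).mp hqb)]
    rfl
  refine ⟨Φ, fun a b => by rw [hΦapp, hF], hinj, fun x => NonUnitalStarAlgHom.norm_map Φ hinj x,
    ?_⟩
  -- the range
  set S := StarAlgebra.adjoin ℂ (Set.range ⇑π ∪ {P}) with hSdef
  have hPmem : P ∈ S := StarAlgebra.subset_adjoin ℂ _ (Or.inr rfl)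
  have hπmem : ∀ a : A, π a ∈ S := fun a => StarAlgebra.subset_adjoin ℂ _ (Or.inl ⟨a, rfl⟩)
  have hrange : (Φ.range : Set (H →L[ℂ] H)) = Set.range ⇑Φ := by
    ext y
    constructor
    · rintro ⟨x, rfl⟩
      exact ⟨x, rfl⟩
    · rintro ⟨x, rfl⟩
      exact ⟨x, rfl⟩
  have hle1 : Φ.range ≤ S.topologicalClosure := by
    rintro y ⟨x, rfl⟩
    obtain ⟨a, ha⟩ := hqI x.1
    obtain ⟨b, hb⟩ := hqJ x.2
    have hx : x = (qI a, qJ b) := by rw [ha, hb]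
    rw [hx]
    have hmem : F (qI a, qJ b) ∈ S.topologicalClosure := by
      rw [hF]
      exact S.le_topologicalClosure
        (add_mem (mul_mem hPmem (hπmem a)) (mul_mem (sub_mem (one_mem S) hPmem) (hπmem b)))
    exact hmem
  have hclosed : IsClosed (Φ.range : Set (H →L[ℂ] H)) := by
    rw [hrange]
    exact ((NonUnitalStarAlgHom.isometry Φ hinj).isClosedEmbedding).isClosed_range
  have hle2 : S.topologicalClosure ≤ Φ.range := by
    apply StarSubalgebra.topologicalClosure_minimal _ hclosed
    apply StarAlgebra.adjoin_le
    rintro x (⟨a, rfl⟩ | hx)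
    · exact ⟨(qI a, qJ a), show F (qI a, qJ a) = π a by rw [hF, hsum]⟩
    · rw [Set.mem_singleton_iff] at hx
      rw [hx]
      exact ⟨(qI 1, qJ 0),
        show F (qI 1, qJ 0) = P by rw [hF, map_one, map_zero, mul_one, mul_zero, add_zero]⟩
  have heq : Φ.range = S.topologicalClosure := le_antisymm hle1 hle2
  rw [← hrange, heq]
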